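/- (Nathanson–Nash) Let A be a set of nonnegative integers with 0 ∈ A and A ≠ {0}, and let d = gcd(A) be the greatest common divisor of the elements of A. If for some h ≥ 1 the h-fold sumset hA has positive lower asymptotic density, then there exists h₀ ≥ 1 such that h₀A eventually coincides with the set of nonnegative multiples of d: there is N such that for all n ≥ N, n ∈ h₀A if and only if d divides n. -/

import Mathlib

open scoped Classical Pointwise

/-- The counting function `#(S ∩ [1,n])` of a set of nonnegative integers. -/
noncomputable def countingFn (S : Set ℕ) (n : ℕ) : ℕ :=
  ((Finset.Icc 1 n).filter (· ∈ S)).card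

namespace NN


lemma zero_mem_nsmul {A : Set ℕ} (h0 : 0 ∈ A) (k : ℕ) : 0 ∈ k • A := by
  induction k with
  | zero => rw [zero_nsmul]; rfl
  | succ k ih => rw [succ_nsmul]; exact ⟨0, ih, 0, h0, rfl⟩

lemma add_mem_nsmul {A : Set ℕ} {x y : ℕ} {j k : ℕ} (hx : x ∈ j • A) (hy : y ∈ k • A) :
    x + y ∈ (j + k) • A := by
  rw [add_nsmul]; exact ⟨x, hx, y, hy, rfl⟩

lemma nsmul_mono {A : Set ℕ} (h0 : 0 ∈ A) {j k : ℕ} (hjk : j ≤ k) : j • A ⊆ k • A := by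
  intro x hx
  obtain ⟨m, rfl⟩ := Nat.exists_eq_add_of_le hjk
  simpa using add_mem_nsmul hx (zero_mem_nsmul h0 m)

lemma mem_one_nsmul {A : Set ℕ} {a : ℕ} (ha : a ∈ A) : a ∈ 1 • A := by
  rw [one_nsmul]; exact ha

lemma dvd_of_mem_nsmul {A : Set ℕ} {d : ℕ} (hd : ∀ a ∈ A, d ∣ a) {k x : ℕ}
    (hx : x ∈ k • A) : d ∣ x := by
  induction k generalizing x with
  | zero => rw [zero_nsmul] at hx; simp only [Set.mem_zero] at hx; subst hx; simp
  | succ k ih =>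
    rw [succ_nsmul] at hx
    obtain ⟨u, hu, v, hv, rfl⟩ := hx
    exact Nat.dvd_add (ih hu) (hd v hv)

lemma exists_nsmul_of_mem_closure {A : Set ℕ} (h0 : 0 ∈ A) {x : ℕ}
    (hx : x ∈ AddSubmonoid.closure A) : ∃ k : ℕ, x ∈ k • A := by
  induction hx using AddSubmonoid.closure_induction with
  | mem x h => exact ⟨1, mem_one_nsmul h⟩
  | zero => exact ⟨0, zero_mem_nsmul h0 0⟩
  | add x y hx hy ihx ihy =>
    obtain ⟨j, hj⟩ := ihx; obtain ⟨k, hk⟩ := ihy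
    exact ⟨j + k, add_mem_nsmul hj hk⟩



lemma gcd_one_pair {A : Set ℕ} (h0 : 0 ∈ A) (ha : ∃ a ∈ A, a ≠ 0)
    (hgcd : ∀ e : ℕ, (∀ a ∈ A, e ∣ a) → e ∣ 1) :
    ∃ s : ℕ, s ∈ AddSubmonoid.closure A ∧ s + 1 ∈ AddSubmonoid.closure A := by
  set S := AddSubmonoid.closure A with hS
  have hsub : A ⊆ (S : Set ℕ) := AddSubmonoid.subset_closure
  set P : ℕ → Prop := fun g => 0 < g ∧ ∃ s₁ s₂ : ℕ, s₁ ∈ S ∧ s₂ ∈ S ∧ s₁ = s₂ + g with hP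
  obtain ⟨a, haA, ha0⟩ := ha
  have hPa : P a := ⟨Nat.pos_of_ne_zero ha0, a, 0, hsub haA, S.zero_mem, (zero_add a).symm⟩
  have hex : ∃ g, P g := ⟨a, hPa⟩
  set g := Nat.find hex with hg
  obtain ⟨hgpos, s₁, s₂, hs₁, hs₂, hseq⟩ := Nat.find_spec hex
  have hdvd : ∀ s ∈ S, g ∣ s := by
    intro s hs
    by_contra hnd
    have hr : s % g ≠ 0 := fun h => hnd (Nat.dvd_of_mod_eq_zero h)
    have hPr : P (s % g) := by
      refine ⟨Nat.pos_of_ne_zero hr, s + (s / g) * s₂, (s / g) * s₁, ?_, ?_, ?_⟩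
      · exact S.add_mem hs (S.nsmul_mem hs₂ _)
      · exact S.nsmul_mem hs₁ _
      · have h1 : g * (s / g) + s % g = s := Nat.div_add_mod s g
        rw [hseq, Nat.mul_add]
        linarith [mul_comm (s / g) g]
    exact Nat.find_min hex (Nat.mod_lt s hgpos) hPr
  have hg1 : g = 1 := Nat.dvd_one.mp (hgcd g (fun b hb => hdvd b (hsub hb)))
  rw [hg] at hg1
  rw [hg1] at hseq
  exact ⟨s₂, hs₂, hseq ▸ hs₁⟩

lemma eventually_mem_closure {A : Set ℕ} (h0 : 0 ∈ A) (ha : ∃ a ∈ A, a ≠ 0)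
    (hgcd : ∀ e : ℕ, (∀ a ∈ A, e ∣ a) → e ∣ 1) :
    ∃ t₁ : ℕ, ∀ m ≥ t₁, m ∈ AddSubmonoid.closure A := by
  obtain ⟨s, hs, hs1⟩ := gcd_one_pair h0 ha hgcd
  set S := AddSubmonoid.closure A with hS
  refine ⟨s * s, fun m hm => ?_⟩
  rcases Nat.eq_zero_or_pos s with rfl | hspos
  · have h1 : (1 : ℕ) ∈ S := by simpa using hs1
    have : m • (1 : ℕ) ∈ S := S.nsmul_mem h1 m
    simpa using this
  · have hq : s ≤ m / s := Nat.le_div_iff_mul_le hspos |>.2 (by nlinarith)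
    have hr : m % s < s := Nat.mod_lt m hspos
    have key : m = (m / s - m % s) * s + (m % s) * (s + 1) := by
      have h1 := Nat.div_add_mod m s
      have h2 : m % s ≤ m / s := le_of_lt (lt_of_lt_of_le hr hq)
      have := Nat.sub_add_cancel h2
      nlinarith [Nat.sub_add_cancel h2]
    rw [key]
    exact S.add_mem (by simpa [smul_eq_mul] using S.nsmul_mem hs (m / s - m % s))
      (by simpa [smul_eq_mul] using S.nsmul_mem hs1 (m % s))



noncomputable def holesFn (S : Set ℕ) (n : ℕ) : ℕ :=
  ((Finset.Icc 1 n).filter (· ∉ S)).card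

lemma count_add_holes (S : Set ℕ) (n : ℕ) : countingFn S n + holesFn S n = n := by
  unfold countingFn holesFn
  rw [Finset.card_filter_add_card_filter_not, Nat.card_Icc]
  omega

noncomputable def nextB (B : Set ℕ) (n b : ℕ) : ℕ :=
  (insert (n+1) ((Finset.Icc (b+1) n).filter (· ∈ B))).min' (Finset.insert_nonempty _ _)

lemma nextB_le (B : Set ℕ) (n b : ℕ) : nextB B n b ≤ n + 1 :=
  Finset.min'_le _ _ (Finset.mem_insert_self _ _)

lemma lt_nextB (B : Set ℕ) {n b : ℕ} (hb : b ≤ n) : b < nextB B n b := by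
  have : b + 1 ≤ nextB B n b := by
    apply Finset.le_min'
    intro y hy
    rcases Finset.mem_insert.1 hy with rfl | hy
    · omega
    · exact (Finset.mem_Icc.1 (Finset.mem_filter.1 hy).1).1
  omega

lemma nextB_le_of_mem {B : Set ℕ} {n b x : ℕ} (hx : x ∈ B) (hbx : b < x) (hxn : x ≤ n) :
    nextB B n b ≤ x :=
  Finset.min'_le _ _ (Finset.mem_insert_of_mem
    (Finset.mem_filter.2 ⟨Finset.mem_Icc.2 ⟨hbx, hxn⟩, hx⟩))

lemma nextB_mem (B : Set ℕ) (n b : ℕ) :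
    nextB B n b = n + 1 ∨ (nextB B n b ∈ B ∧ nextB B n b ≤ n) := by
  rcases Finset.mem_insert.1 (Finset.min'_mem _ (Finset.insert_nonempty (n+1)
      ((Finset.Icc (b+1) n).filter (· ∈ B)))) with h | h
  · exact Or.inl h
  · obtain ⟨h1, h2⟩ := Finset.mem_filter.1 h
    exact Or.inr ⟨h2, (Finset.mem_Icc.1 h1).2⟩

noncomputable def prevB (B : Set ℕ) (m : ℕ) : ℕ := Nat.findGreatest (· ∈ B) (m-1)

lemma prevB_mem {B : Set ℕ} (hB : 0 ∈ B) (m : ℕ) : prevB B m ∈ B :=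
  Nat.findGreatest_spec (Nat.zero_le _) hB

lemma prevB_le (B : Set ℕ) (m : ℕ) : prevB B m ≤ m - 1 := Nat.findGreatest_le _

lemma prevB_greatest {B : Set ℕ} {m k : ℕ} (h1 : prevB B m < k) (h2 : k ≤ m - 1) : k ∉ B :=
  Nat.findGreatest_is_greatest h1 h2

lemma sum_gaps_le {B : Set ℕ} (n : ℕ) :
    ∑ b ∈ (Finset.range n).filter (· ∈ B), (nextB B n b - b - 1) ≤ holesFn B n := by
  classical
  have hrw : ∑ b ∈ (Finset.range n).filter (· ∈ B), (nextB B n b - b - 1)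
      = (((Finset.range n).filter (· ∈ B)).sigma
          (fun b => Finset.Icc 1 (nextB B n b - b - 1))).card := by
    rw [Finset.card_sigma]
    refine Finset.sum_congr rfl fun b _ => ?_
    rw [Nat.card_Icc]
    omega
  rw [hrw]
  apply Finset.card_le_card_of_injOn (fun p => p.1 + p.2)
  · rintro ⟨b, j⟩ hp
    dsimp only
    obtain ⟨hp1, hp2⟩ := Finset.mem_sigma.1 hp
    dsimp only at hp1 hp2
    obtain ⟨hbn', hbB⟩ := Finset.mem_filter.1 hp1
    have hbn : b < n := Finset.mem_range.1 hbn'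
    obtain ⟨hj1, hj2⟩ := Finset.mem_Icc.1 hp2
    have h1 : nextB B n b ≤ n + 1 := nextB_le B n b
    have h2 : b < nextB B n b := lt_nextB B (le_of_lt hbn)
    refine Finset.mem_filter.2 ⟨Finset.mem_Icc.2 ⟨by omega, by omega⟩, ?_⟩
    intro hmem
    have := nextB_le_of_mem hmem (by omega : b < b + j) (by omega : b + j ≤ n)
    omega
  · rintro ⟨b, j⟩ hp ⟨b', j'⟩ hp' heq
    simp only [Finset.coe_sigma, Set.mem_sigma_iff] at hp hp'
    obtain ⟨hp1, hp2⟩ := hp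
    obtain ⟨hp1', hp2'⟩ := hp'
    obtain ⟨hbn', hbB⟩ := Finset.mem_filter.1 hp1
    obtain ⟨hbn1', hbB'⟩ := Finset.mem_filter.1 hp1'
    have hbn : b < n := Finset.mem_range.1 hbn'
    have hbn2 : b' < n := Finset.mem_range.1 hbn1'
    obtain ⟨hj1, hj2⟩ := Finset.mem_Icc.1 hp2
    obtain ⟨hj1', hj2'⟩ := Finset.mem_Icc.1 hp2'
    have hsum : b + j = b' + j' := heq
    have hbb' : b = b' := by
      rcases lt_trichotomy b b' with h | h | h
      · exfalso
        have := nextB_le_of_mem hbB' h (le_of_lt hbn2)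
        omega
      · exact h
      · exfalso
        have := nextB_le_of_mem hbB h (le_of_lt hbn)
        omega
    subst hbb'
    have : j = j' := by omega
    subst this
    rfl

lemma holes_sum_le {B C : Set ℕ} (hB : 0 ∈ B) (hC : 0 ∈ C) {α : ℝ}
    (hα0 : 0 ≤ α) (hα1 : α ≤ 1)
    (hα : ∀ ℓ : ℕ, 1 ≤ ℓ → α * ℓ ≤ countingFn C ℓ) (n : ℕ) :
    (holesFn (B + C) n : ℝ) ≤ (1 - α) * holesFn B n := by
  classical
  set holesBC := (Finset.Icc 1 n).filter (· ∉ B + C) with hholesBC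
  set Bfin := (Finset.range n).filter (· ∈ B) with hBfin
  have hnotB : ∀ m ∈ holesBC, m ∉ B ∧ 1 ≤ m ∧ m ≤ n := by
    intro m hm
    obtain ⟨hm1, hm2⟩ := Finset.mem_filter.1 hm
    obtain ⟨h1, h2⟩ := Finset.mem_Icc.1 hm1
    exact ⟨fun hmB => hm2 ⟨m, hmB, 0, hC, by show m + 0 = m; omega⟩, h1, h2⟩
  have hmaps : ∀ m ∈ holesBC, prevB B m ∈ Bfin := by
    intro m hm
    obtain ⟨_, h1, h2⟩ := hnotB m hm
    have := prevB_le B m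
    exact Finset.mem_filter.2 ⟨Finset.mem_range.2 (by omega), prevB_mem hB m⟩
  have hcard : holesBC.card = ∑ b ∈ Bfin, (holesBC.filter (fun m => prevB B m = b)).card :=
    Finset.card_eq_sum_card_fiberwise hmaps
  have hfiber : ∀ b ∈ Bfin, (holesBC.filter (fun m => prevB B m = b)).card
      ≤ holesFn C (nextB B n b - b - 1) := by
    intro b hb
    apply Finset.card_le_card_of_injOn (fun m => m - b)
    · intro m hm
      dsimp only
      obtain ⟨hm', hab⟩ := Finset.mem_filter.1 hm
      obtain ⟨hmB, hm1, hmn⟩ := hnotB m hm'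
      obtain ⟨hmIcc, hmBC⟩ := Finset.mem_filter.1 hm'
      have hble : b ≤ m - 1 := hab ▸ prevB_le B m
      have hbm : b < m := by omega
      have hbB : b ∈ B := hab ▸ prevB_mem hB m
      have hmC : m - b ∉ C := fun hc => hmBC ⟨b, hbB, m - b, hc, by show b + (m - b) = m; omega⟩
      have hbnext : b < nextB B n b := lt_nextB B (by omega)
      have hmlt : m < nextB B n b := by
        by_contra hge
        push_neg at hge
        rcases nextB_mem B n b with h | ⟨h1, h3⟩
        · omega
        · rcases eq_or_lt_of_le hge with heq | hlt
          · exact hmB (heq ▸ h1)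
          · exact prevB_greatest (by rw [hab]; omega) (by omega) h1
      exact Finset.mem_filter.2 ⟨Finset.mem_Icc.2 ⟨by omega, by omega⟩, hmC⟩
    · intro m hm m' hm' heq
      simp only [Finset.coe_filter, Set.mem_setOf_eq] at hm hm'
      obtain ⟨hm1, hab⟩ := hm
      obtain ⟨hm1', hab'⟩ := hm'
      have h1 : b ≤ m - 1 := hab ▸ prevB_le B m
      have h2 : b ≤ m' - 1 := hab' ▸ prevB_le B m'
      obtain ⟨_, hm11, _⟩ := hnotB m hm1
      obtain ⟨_, hm11', _⟩ := hnotB m' hm1'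
      simp only at heq
      omega
  -- real-valued bound on the fiber count
  have hfiberR : ∀ b ∈ Bfin, ((holesBC.filter (fun m => prevB B m = b)).card : ℝ)
      ≤ (1 - α) * (nextB B n b - b - 1 : ℕ) := by
    intro b hb
    have h1 := hfiber b hb
    have h2 : (holesFn C (nextB B n b - b - 1) : ℝ) ≤ (1 - α) * (nextB B n b - b - 1 : ℕ) := by
      set ℓ := nextB B n b - b - 1 with hℓ
      rcases Nat.eq_zero_or_pos ℓ with h | h
      · rw [h]
        simp [holesFn]
      · have h3 := hα ℓ h
        have h4 := count_add_holes C ℓ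
        have h5 : (countingFn C ℓ : ℝ) + (holesFn C ℓ : ℝ) = (ℓ : ℝ) := by exact_mod_cast congrArg Nat.cast h4
        nlinarith
    calc ((holesBC.filter (fun m => prevB B m = b)).card : ℝ)
        ≤ (holesFn C (nextB B n b - b - 1) : ℝ) := by exact_mod_cast h1
      _ ≤ _ := h2
  have hsum : (holesBC.card : ℝ) ≤ (1 - α) * ∑ b ∈ Bfin, ((nextB B n b - b - 1 : ℕ) : ℝ) := by
    rw [hcard]
    push_cast
    rw [Finset.mul_sum]
    exact Finset.sum_le_sum hfiberR
  have hgaps : (∑ b ∈ Bfin, ((nextB B n b - b - 1 : ℕ) : ℝ)) ≤ (holesFn B n : ℝ) := by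
    have := sum_gaps_le (B := B) n
    calc (∑ b ∈ Bfin, ((nextB B n b - b - 1 : ℕ) : ℝ))
        = ((∑ b ∈ Bfin, (nextB B n b - b - 1) : ℕ) : ℝ) := by push_cast; ring
      _ ≤ (holesFn B n : ℝ) := by exact_mod_cast this
  have hBCcard : holesFn (B + C) n = holesBC.card := rfl
  rw [hBCcard]
  calc (holesBC.card : ℝ) ≤ (1 - α) * ∑ b ∈ Bfin, ((nextB B n b - b - 1 : ℕ) : ℝ) := hsum
    _ ≤ (1 - α) * (holesFn B n : ℝ) := by
        apply mul_le_mul_of_nonneg_left hgaps (by linarith)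





lemma holes_pow {C : Set ℕ} (hC : 0 ∈ C) {α : ℝ} (hα0 : 0 ≤ α) (hα1 : α ≤ 1)
    (hα : ∀ ℓ : ℕ, 1 ≤ ℓ → α * ℓ ≤ countingFn C ℓ) (k n : ℕ) :
    (holesFn (k • C) n : ℝ) ≤ (1 - α) ^ k * n := by
  induction k with
  | zero =>
    rw [zero_nsmul, pow_zero, one_mul]
    have : holesFn (0 : Set ℕ) n ≤ n := by
      have := count_add_holes (0 : Set ℕ) n
      omega
    exact_mod_cast this
  | succ k ih =>
    rw [succ_nsmul]
    calc (holesFn (k • C + C) n : ℝ)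
        ≤ (1 - α) * holesFn (k • C) n := holes_sum_le (zero_mem_nsmul hC k) hC hα0 hα1 hα n
      _ ≤ (1 - α) * ((1 - α) ^ k * n) := by
          apply mul_le_mul_of_nonneg_left ih (by linarith)
      _ = (1 - α) ^ (k + 1) * n := by ring

lemma pigeonhole {D : Set ℕ} (hD : 0 ∈ D) (h : ∀ n : ℕ, 1 ≤ n → 2 * holesFn D n < n) :
    ∀ n : ℕ, n ∈ D + D := by
  intro n
  rcases Nat.eq_zero_or_pos n with rfl | hn
  · exact ⟨0, hD, 0, hD, rfl⟩
  by_cases hnD : n ∈ D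
  · exact ⟨n, hnD, 0, hD, rfl⟩
  set X := (Finset.Icc 1 n).filter (· ∈ D) with hX
  set Y := X.image (n - ·) with hY
  have hXcard : X.card + holesFn D n = n := count_add_holes D n
  have hYcard : Y.card = X.card := by
    apply Finset.card_image_of_injOn
    intro x hx y hy hxy
    obtain ⟨hx1, _⟩ := Finset.mem_filter.1 hx
    obtain ⟨hy1, _⟩ := Finset.mem_filter.1 hy
    have hx2 := Finset.mem_Icc.1 hx1
    have hy2 := Finset.mem_Icc.1 hy1
    dsimp only at hxy
    omega
  have hsub : X ∪ Y ⊆ Finset.Icc 1 (n - 1) := by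
    intro z hz
    rcases Finset.mem_union.1 hz with hz | hz
    · obtain ⟨hz1, hz2⟩ := Finset.mem_filter.1 hz
      have := Finset.mem_Icc.1 hz1
      refine Finset.mem_Icc.2 ⟨this.1, ?_⟩
      have : z ≠ n := fun h => hnD (h ▸ hz2)
      omega
    · obtain ⟨x, hx, rfl⟩ := Finset.mem_image.1 hz
      obtain ⟨hx1, hx2⟩ := Finset.mem_filter.1 hx
      have hxn := Finset.mem_Icc.1 hx1
      have : x ≠ n := fun h => hnD (h ▸ hx2)
      exact Finset.mem_Icc.2 ⟨by omega, by omega⟩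
  have hinter : (X ∩ Y).Nonempty := by
    rw [← Finset.card_pos]
    have h1 := Finset.card_inter_add_card_union X Y
    have h2 : (X ∪ Y).card ≤ n - 1 := le_trans (Finset.card_le_card hsub) (by rw [Nat.card_Icc]; omega)
    have h3 := h n hn
    omega
  obtain ⟨x, hx⟩ := hinter
  obtain ⟨hxX, hxY⟩ := Finset.mem_inter.1 hx
  obtain ⟨hx1, hxD⟩ := Finset.mem_filter.1 hxX
  obtain ⟨y, hyX, hyx⟩ := Finset.mem_image.1 hxY
  obtain ⟨hy1, hyD⟩ := Finset.mem_filter.1 hyX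
  have hy2 := Finset.mem_Icc.1 hy1
  have hyx' : n - y = x := hyx
  exact ⟨y, hyD, x, hxD, by show y + x = n; omega⟩

lemma exists_fold_all {C : Set ℕ} (hC : 0 ∈ C) {α : ℝ} (hα0 : 0 < α) (hα1 : α ≤ 1)
    (hα : ∀ ℓ : ℕ, 1 ≤ ℓ → α * ℓ ≤ countingFn C ℓ) :
    ∃ k : ℕ, 1 ≤ k ∧ ∀ n : ℕ, n ∈ k • C := by
  obtain ⟨k, hk⟩ := exists_pow_lt_of_lt_one (by norm_num : (0:ℝ) < 1/2) (by linarith : 1 - α < 1)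
  have hk1 : 1 ≤ k := by
    by_contra hk0
    push_neg at hk0
    interval_cases k
    · simp at hk; linarith
  have hhalf : ∀ n : ℕ, 1 ≤ n → 2 * holesFn (k • C) n < n := by
    intro n hn
    have h1 := holes_pow hC (le_of_lt hα0) hα1 hα k n
    have h2 : ((1 - α) ^ k : ℝ) * n ≤ (1/2) * n := by
      apply mul_le_mul_of_nonneg_right (le_of_lt hk) (by positivity)
    have h3 : (holesFn (k • C) n : ℝ) ≤ (1/2) * n := le_trans h1 h2
    -- strictness: need 2 * holes < n
    have h4 : ((1 - α) ^ k : ℝ) * n < (1/2) * n := by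
      apply mul_lt_mul_of_pos_right hk (by exact_mod_cast hn)
    have h5 : (2 * holesFn (k • C) n : ℝ) < n := by
      have := le_trans h1 (le_of_lt h4)
      push_cast
      push_cast at this
      linarith
    exact_mod_cast h5
  refine ⟨k + k, by omega, fun n => ?_⟩
  have := pigeonhole (zero_mem_nsmul hC k) hhalf n
  obtain ⟨x, hx, y, hy, rfl⟩ := this
  exact add_mem_nsmul hx hy



lemma countingFn_mono {S T : Set ℕ} (h : S ⊆ T) (n : ℕ) : countingFn S n ≤ countingFn T n := by
  apply Finset.card_le_card
  intro x hx
  simp only [Finset.mem_filter] at *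
  exact ⟨hx.1, h hx.2⟩

lemma countingFn_all {S : Set ℕ} {n : ℕ} (h : ∀ x, 1 ≤ x → x ≤ n → x ∈ S) :
    countingFn S n = n := by
  unfold countingFn
  rw [Finset.filter_true_of_mem, Nat.card_Icc]
  · omega
  · intro x hx
    have := Finset.mem_Icc.1 hx
    exact h x this.1 this.2

lemma exists_uniform_fold {A : Set ℕ} (h0 : 0 ∈ A) (W : ℕ) :
    ∃ K : ℕ, ∀ x, x < W → x ∈ AddSubmonoid.closure A → x ∈ K • A := by
  induction W with
  | zero => exact ⟨0, fun x hx _ => absurd hx (Nat.not_lt_zero x)⟩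
  | succ W ih =>
    obtain ⟨K, hK⟩ := ih
    by_cases hW : W ∈ AddSubmonoid.closure A
    · obtain ⟨K', hK'⟩ := exists_nsmul_of_mem_closure h0 hW
      refine ⟨max K K', fun x hx hcl => ?_⟩
      rcases Nat.lt_succ_iff_lt_or_eq.1 hx with h | rfl
      · exact nsmul_mono h0 (le_max_left _ _) (hK x h hcl)
      · exact nsmul_mono h0 (le_max_right _ _) hK'
    · refine ⟨K, fun x hx hcl => ?_⟩
      rcases Nat.lt_succ_iff_lt_or_eq.1 hx with h | rfl
      · exact hK x h hcl
      · exact absurd hcl hW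

lemma main_one {A : Set ℕ} (h0 : 0 ∈ A) (ha : ∃ a ∈ A, a ≠ 0)
    (hgcd : ∀ e : ℕ, (∀ a ∈ A, e ∣ a) → e ∣ 1)
    {h N₀ : ℕ} (hh : 1 ≤ h) {α : ℝ} (hα : 0 < α)
    (hcnt : ∀ n : ℕ, N₀ ≤ n → α * n ≤ countingFn (h • A) n) :
    ∃ h₀ N : ℕ, 1 ≤ h₀ ∧ ∀ n, N ≤ n → n ∈ h₀ • A := by
  obtain ⟨t₁, ht₁⟩ := eventually_mem_closure h0 ha hgcd
  set M := max N₀ 1 with hM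
  set C : Set ℕ := (h • A) ∪ {x | x ≤ M} with hC
  have hC0 : 0 ∈ C := Or.inr (by simp)
  set α' : ℝ := min α 1 with hα'
  have hα'0 : 0 < α' := lt_min hα one_pos
  have hα'1 : α' ≤ 1 := min_le_right _ _
  have hcnt' : ∀ n : ℕ, 1 ≤ n → α' * n ≤ countingFn C n := by
    intro n hn
    by_cases hnM : n ≤ M
    · have : countingFn C n = n := countingFn_all (fun x _ hx => Or.inr (le_trans hx hnM))
      rw [this]
      calc α' * n ≤ 1 * n := mul_le_mul_of_nonneg_right hα'1 (by positivity)
        _ = n := one_mul _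
    · push_neg at hnM
      have hN₀ : N₀ ≤ n := le_trans (le_max_left _ _) (le_of_lt hnM)
      calc α' * n ≤ α * n := mul_le_mul_of_nonneg_right (min_le_left _ _) (by positivity)
        _ ≤ countingFn (h • A) n := hcnt n hN₀
        _ ≤ countingFn C n := by exact_mod_cast countingFn_mono Set.subset_union_left n
  obtain ⟨k, hk1, hkall⟩ := exists_fold_all hC0 hα'0 hα'1 hcnt'
  -- uniform fold for the window [0, t₁ + M]
  obtain ⟨Kw, hKw⟩ := exists_uniform_fold h0 (t₁ + M + 1)
  -- every c ∈ C satisfies c + t₁ ∈ H • A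
  set H := h + Kw + 1 with hH
  have hshift : ∀ c ∈ C, c + t₁ ∈ H • A := by
    intro c hc
    have ht₁closure : t₁ ∈ AddSubmonoid.closure A := ht₁ t₁ le_rfl
    rcases hc with hc | hc
    · obtain ⟨K₀, hK₀⟩ := exists_nsmul_of_mem_closure h0 ht₁closure
      have h1 : t₁ ∈ Kw • A := hKw t₁ (by omega) ht₁closure
      have := add_mem_nsmul hc h1
      exact nsmul_mono h0 (by omega) this
    · have h1 : c + t₁ ∈ AddSubmonoid.closure A := ht₁ (c + t₁) (by omega)
      have h2 : c + t₁ ∈ Kw • A := hKw (c + t₁) (by simp only [Set.mem_setOf_eq] at hc; omega) h1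
      exact nsmul_mono h0 (by omega) h2
  have hmain : ∀ j : ℕ, ∀ x ∈ j • C, x + j * t₁ ∈ (j * H) • A := by
    intro j
    induction j with
    | zero =>
      intro x hx
      rw [zero_nsmul] at hx
      simp only [Set.mem_zero] at hx
      subst hx
      simpa using zero_mem_nsmul h0 (0 * H)
    | succ j ih =>
      intro x hx
      rw [succ_nsmul] at hx
      obtain ⟨u, hu, c, hcC, rfl⟩ := hx
      have h1 := ih u hu
      have h2 := hshift c hcC
      have h3 := add_mem_nsmul h1 h2
      have heq : u + j * t₁ + (c + t₁) = u + c + (j + 1) * t₁ := by ring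
      have heq2 : j * H + H = (j + 1) * H := by ring
      rw [heq, heq2] at h3
      exact h3
  refine ⟨k * H, k * t₁, Nat.mul_pos hk1 (by omega), fun n hn => ?_⟩
  have h1 : n - k * t₁ ∈ k • C := hkall _
  have h2 := hmain k _ h1
  have heq : n - k * t₁ + k * t₁ = n := by omega
  rw [heq] at h2
  exact h2



lemma mem_nsmul_scale {A : Set ℕ} {d : ℕ} (hd0 : 0 < d) (hd₁ : ∀ a ∈ A, d ∣ a) (j m : ℕ) :
    m ∈ j • {x : ℕ | x * d ∈ A} ↔ m * d ∈ j • A := by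
  induction j generalizing m with
  | zero =>
    rw [zero_nsmul, zero_nsmul]
    simp only [Set.mem_zero]
    constructor
    · rintro rfl; simp
    · intro h
      rcases Nat.mul_eq_zero.1 h with h | h
      · exact h
      · omega
  | succ j ih =>
    rw [succ_nsmul, succ_nsmul]
    constructor
    · rintro ⟨u, hu, v, hv, rfl⟩
      exact ⟨u * d, (ih u).1 hu, v * d, hv, by ring⟩
    · rintro ⟨x, hx, y, hy, hxy⟩
      obtain ⟨u, rfl⟩ := dvd_of_mem_nsmul hd₁ hx
      obtain ⟨v, rfl⟩ := hd₁ y hy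
      have hm : m = u + v := by
        have h1 : m * d = (u + v) * d := by rw [← hxy]; ring
        exact Nat.eq_of_mul_eq_mul_right hd0 h1
      refine ⟨u, (ih u).2 (by rwa [mul_comm]), v, ?_, by show u + v = m; omega⟩
      show v * d ∈ A
      rwa [mul_comm]

lemma count_scale {A : Set ℕ} {d : ℕ} (hd0 : 0 < d) (hd₁ : ∀ a ∈ A, d ∣ a) (j m : ℕ) :
    countingFn (j • {x : ℕ | x * d ∈ A}) m = countingFn (j • A) (d * m) := by
  unfold countingFn
  apply Finset.card_bij (fun x _ => x * d)
  · intro x hx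
    obtain ⟨hx1, hx2⟩ := Finset.mem_filter.1 hx
    obtain ⟨h1, h2⟩ := Finset.mem_Icc.1 hx1
    refine Finset.mem_filter.2 ⟨Finset.mem_Icc.2 ⟨by nlinarith, by nlinarith⟩, ?_⟩
    exact (mem_nsmul_scale hd0 hd₁ j x).1 hx2
  · intro x hx y hy hxy
    exact Nat.eq_of_mul_eq_mul_right hd0 hxy
  · intro y hy
    obtain ⟨hy1, hy2⟩ := Finset.mem_filter.1 hy
    obtain ⟨h1, h2⟩ := Finset.mem_Icc.1 hy1
    obtain ⟨u, rfl⟩ := dvd_of_mem_nsmul hd₁ hy2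
    refine ⟨u, ?_, by ring⟩
    have hu1 : 1 ≤ u := by
      rcases Nat.eq_zero_or_pos u with rfl | h
      · omega
      · exact h
    have hu2 : u ≤ m := by
      by_contra hc
      push_neg at hc
      nlinarith
    refine Finset.mem_filter.2 ⟨Finset.mem_Icc.2 ⟨hu1, hu2⟩, ?_⟩
    exact (mem_nsmul_scale hd0 hd₁ j u).2 (by rwa [mul_comm])


end NN

/-- (Nathanson–Nash) Let `A` be a set of nonnegative integers with `0 ∈ A` and `A ≠ {0}`,
and let `d = gcd(A)`. If for some `h ≥ 1` the `h`-fold sumset `hA` has positive lower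
asymptotic density, then there exists `h₀ ≥ 1` such that `h₀A` eventually coincides with
the set of nonnegative multiples of `d`. -/
theorem stmt_9 (A : Set ℕ) (h0 : 0 ∈ A) (hA : A ≠ {0}) (d : ℕ)
    (hd₁ : ∀ a ∈ A, d ∣ a) (hd₂ : ∀ e : ℕ, (∀ a ∈ A, e ∣ a) → e ∣ d)
    (hdens : ∃ h : ℕ, 1 ≤ h ∧
      0 < Filter.liminf (fun n : ℕ => (countingFn (h • A) n : ℝ) / n) Filter.atTop) :
    ∃ h₀ : ℕ, 1 ≤ h₀ ∧ ∃ N : ℕ, ∀ n ≥ N, (n ∈ h₀ • A ↔ d ∣ n) := by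
  classical
  -- an element of A that is nonzero
  have ha : ∃ a ∈ A, a ≠ 0 := by
    by_contra hc
    push_neg at hc
    apply hA
    apply Set.eq_singleton_iff_unique_mem.2
    exact ⟨h0, fun x hx => hc x hx⟩
  -- d is positive
  have hd0 : 0 < d := by
    rcases Nat.eq_zero_or_pos d with rfl | h
    · obtain ⟨a, haA, ha0⟩ := ha
      exact absurd (Nat.eq_zero_of_zero_dvd (hd₁ a haA)) ha0
    · exact h
  set A' : Set ℕ := {x : ℕ | x * d ∈ A} with hA'
  have h0' : 0 ∈ A' := by show 0 * d ∈ A; simpa using h0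
  have ha' : ∃ a ∈ A', a ≠ 0 := by
    obtain ⟨a, haA, ha0⟩ := ha
    obtain ⟨u, rfl⟩ := hd₁ a haA
    exact ⟨u, by show u * d ∈ A; rwa [mul_comm], by rintro rfl; simp at ha0⟩
  have hgcd' : ∀ e : ℕ, (∀ a ∈ A', e ∣ a) → e ∣ 1 := by
    intro e he
    have h1 : ∀ a ∈ A, e * d ∣ a := by
      intro a haA
      obtain ⟨u, rfl⟩ := hd₁ a haA
      have : e ∣ u := he u (by show u * d ∈ A; rwa [mul_comm])
      obtain ⟨w, rfl⟩ := this
      exact ⟨w, by ring⟩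
    have h2 : e * d ∣ d := hd₂ _ h1
    have h3 : e * d ∣ 1 * d := by rwa [one_mul]
    exact (Nat.mul_dvd_mul_iff_right hd0).1 h3
  -- extract density
  obtain ⟨h, hh, hpos⟩ := hdens
  set L := Filter.liminf (fun n : ℕ => (countingFn (h • A) n : ℝ) / n) Filter.atTop with hL
  have hbdd : Filter.IsBoundedUnder (· ≥ ·) Filter.atTop
      (fun n : ℕ => (countingFn (h • A) n : ℝ) / n) :=
    Filter.isBoundedUnder_of ⟨0, fun n => by positivity⟩
  have hev : ∀ᶠ n in Filter.atTop, L / 2 < (countingFn (h • A) n : ℝ) / n :=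
    Filter.eventually_lt_of_lt_liminf (by linarith) hbdd
  obtain ⟨N₀, hN₀⟩ := Filter.eventually_atTop.1 hev
  -- counting bound for A'
  have hcnt : ∀ m : ℕ, max N₀ 1 ≤ m → (L / 2) * m ≤ countingFn (h • A') m := by
    intro m hm
    have hm1 : 1 ≤ m := le_trans (le_max_right _ _) hm
    have hdm : N₀ ≤ d * m := by
      have : N₀ ≤ m := le_trans (le_max_left _ _) hm
      nlinarith
    have h1 := hN₀ (d * m) hdm
    have hdm0 : (0:ℝ) < (d * m : ℕ) := by
      have : 0 < d * m := Nat.mul_pos hd0 hm1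
      exact_mod_cast this
    rw [div_lt_div_iff₀ (by norm_num : (0:ℝ) < 2) hdm0] at h1
    have h2 : countingFn (h • A') m = countingFn (h • A) (d * m) :=
      NN.count_scale hd0 hd₁ h m
    rw [h2]
    have hLnn : 0 ≤ L / 2 := by linarith
    have hc2 : (L / 2) * ((d : ℝ) * m) ≤ (countingFn (h • A) (d * m) : ℝ) := by
      push_cast at h1
      nlinarith
    have hmdm : (m : ℝ) ≤ (d : ℝ) * m := by
      have hd1 : (1 : ℝ) ≤ d := by exact_mod_cast hd0
      nlinarith [Nat.cast_nonneg (α := ℝ) m]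
    calc (L / 2) * m ≤ (L / 2) * ((d : ℝ) * m) := mul_le_mul_of_nonneg_left hmdm hLnn
      _ ≤ _ := hc2
  obtain ⟨h₀, N₁, hh₀, hall⟩ := NN.main_one h0' ha' hgcd'
    hh (by linarith : (0:ℝ) < L / 2) hcnt
  refine ⟨h₀, hh₀, d * N₁, fun n hn => ⟨fun hmem => NN.dvd_of_mem_nsmul hd₁ hmem, fun hdvd => ?_⟩⟩
  obtain ⟨u, rfl⟩ := hdvd
  have hu : N₁ ≤ u := Nat.le_of_mul_le_mul_left hn hd0
  have := hall u hu
  have h3 := (NN.mem_nsmul_scale hd0 hd₁ h₀ u).1 this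
  rwa [mul_comm] at h3
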